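/- For the upper triangular matrix walk on M_n(𝔽₂), the process obtained by projecting onto the j-th column (for 2 ≤ j ≤ n) is itself a Markov chain: the generator applied to any function depending only on the j-th column yields a function depending only on the j-th column, and the resulting column process has the generator of the East process on [j−1] at density 1/2 (in the convention where entry i of the column can be resampled to a uniform bit at rate 1 if entry i+1 of the column equals 1, for 1 ≤ i ≤ j−1). -/

import Mathlib

open Matrix

/-- The generator of the continuous-time upper triangular matrix walk:
`(Lf)(M) = (1/2) ∑_{i=1}^{n−1} ∑_{a∈{0,1}} [f((I + aE^{i,i+1})M) − f(M)]`. -/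
noncomputable def matrixWalkGen (n : ℕ)
    (f : Matrix (Fin n) (Fin n) (ZMod 2) → ℝ)
    (M : Matrix (Fin n) (Fin n) (ZMod 2)) : ℝ :=
  (1 / 2) * ∑ i : Fin (n - 1), ∑ a : ZMod 2,
    (f ((1 + a • Matrix.single
          (⟨i.val, by have := i.isLt; omega⟩ : Fin n)
          (⟨i.val + 1, by have := i.isLt; omega⟩ : Fin n) (1 : ZMod 2)) * M) - f M)

/-- The generator of the East process (at density 1/2, in the convention where a `1` at
site `i+1` allows entry `i` to be resampled to a uniform bit at rate 1). -/
noncomputable def eastGen (n : ℕ)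
    (h : (Fin n → ZMod 2) → ℝ) (y : Fin n → ZMod 2) : ℝ :=
  ∑ i : Fin (n - 1),
    if y ⟨i.val + 1, by have := i.isLt; omega⟩ = 1 then
      ((1 / 2) * ∑ c : ZMod 2,
        h (Function.update y (⟨i.val, by have := i.isLt; omega⟩ : Fin n) c)) - h y
    else 0

lemma colfact (n : ℕ) (j : Fin n) (M : Matrix (Fin n) (Fin n) (ZMod 2))
    (p q : Fin n) (hpq : p ≠ q) (a : ZMod 2) :
    (fun k => ((1 + a • Matrix.single p q (1 : ZMod 2)) * M) k j)
      = Function.update (fun k => M k j) p (M p j + a * M q j) := by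
  funext k
  rw [Matrix.add_mul, Matrix.one_mul, Matrix.smul_mul, Matrix.add_apply, Matrix.smul_apply,
    Function.update_apply, smul_eq_mul]
  by_cases hk : k = p
  · subst hk
    rw [Matrix.single_mul_apply_same, if_pos rfl, one_mul]
  · rw [Matrix.single_mul_apply_of_ne 1 p q k j hk M, if_neg hk, mul_zero, add_zero]

lemma zmod2sum (g : ZMod 2 → ℝ) : ∑ a : ZMod 2, g a = g 0 + g 1 := by
  have : (Finset.univ : Finset (ZMod 2)) = {0, 1} := by decide
  rw [this, Finset.sum_pair (by decide)]

/-- Projecting the upper triangular matrix walk onto the `j`-th column gives a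
Markov chain: for any function `h` of the `j`-th column, the matrix-walk generator applied
to `M ↦ h(j-th column of M)` is a function of the `j`-th column only, and equals the East
process generator (at density 1/2, with a `1` at entry `i+1` allowing entry `i` to be
resampled) applied to `h` at the `j`-th column. -/
theorem column_projection_is_east (n : ℕ) (j : Fin n)
    (h : (Fin n → ZMod 2) → ℝ)
    (M : Matrix (Fin n) (Fin n) (ZMod 2))
    (hM : (∀ i, M i i = 1) ∧ ∀ i i' : Fin n, i' < i → M i i' = 0) :
    matrixWalkGen n (fun M' => h fun i => M' i j) M = eastGen n h (fun i => M i j) := by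
  unfold matrixWalkGen eastGen
  rw [Finset.mul_sum]
  refine Finset.sum_congr rfl fun i _ => ?_
  set p : Fin n := ⟨i.val, by have := i.isLt; omega⟩ with hp
  set q : Fin n := ⟨i.val + 1, by have := i.isLt; omega⟩ with hq
  have hpq : p ≠ q := by
    simp [hp, hq, Fin.ext_iff]
  have key : ∀ a : ZMod 2,
      (fun k => ((1 + a • Matrix.single p q (1 : ZMod 2)) * M) k j)
        = Function.update (fun k => M k j) p (M p j + a * M q j) :=
    fun a => colfact n j M p q hpq a
  simp only [key]
  rw [zmod2sum]
  rcases (by decide : ∀ x : ZMod 2, x = 0 ∨ x = 1) (M q j) with h0 | h1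
  · rw [if_neg (by rw [h0]; decide)]
    simp [h0, Function.update_eq_self]
  · rw [if_pos h1, zmod2sum]
    have e0 : Function.update (fun k => M k j) p (M p j + 0 * M q j)
        = Function.update (fun k => M k j) p (M p j) := by norm_num
    have e1 : Function.update (fun k => M k j) p (M p j + 1 * M q j)
        = Function.update (fun k => M k j) p (M p j + 1) := by rw [h1]; ring_nf
    rw [e0, e1, Function.update_eq_self]
    have split : ({(M p j), (M p j + 1)} : Finset (ZMod 2)) = Finset.univ := by
      rcases (by decide : ∀ x : ZMod 2, x = 0 ∨ x = 1) (M p j) with h | h <;> rw [h] <;> decide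
    have : h (Function.update (fun k => M k j) p (M p j))
        + h (Function.update (fun k => M k j) p (M p j + 1))
        = ∑ c : ZMod 2, h (Function.update (fun k => M k j) p c) := by
      rw [← split, Finset.sum_pair (by
        rcases (by decide : ∀ x : ZMod 2, x = 0 ∨ x = 1) (M p j) with h | h <;> rw [h] <;> decide)]
    rw [zmod2sum, Function.update_eq_self] at this
    ring_nf
    ring_nf at this
    linarith
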